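/- Let X be a finite set of cardinality N, and let E be an exponential family on X with extended tangent space T of dimension dim T = ⌈N/2⌉ (so E has dimension ⌈N/2⌉ − 1) such that sup_P inf_{Q∈E} D(P‖Q) = log 2. If E contains the uniform distribution on X, then there exists a partition of X such that E equals the set of all strictly positive probability distributions on X that are constant on each block of the partition. -/

import Mathlib

open scoped BigOperators Classical

noncomputable section

variable {X : Type*}

/-- A probability distribution on a finite set `X`. -/
def IsProb [Fintype X] (P : X → ℝ) : Prop :=
  (∀ x, 0 ≤ P x) ∧ ∑ x, P x = 1

/-- Information divergence `D(P‖Q)` with values in `EReal`, equal to `⊤` if the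
support of `P` is not contained in the support of `Q`.  (The convention
`0 · log 0 = 0` holds automatically since `Real.log 0 = 0`.) -/
def KL [Fintype X] (P Q : X → ℝ) : EReal :=
  if ∀ x, Q x = 0 → P x = 0 then ((∑ x, P x * Real.log (P x / Q x) : ℝ) : EReal) else ⊤

/-- The exponential family with strictly positive reference measure `ν` and extended
tangent space `T` (a subspace of `ℝ^X` containing the constants): the set of strictly
positive probability distributions `P` with `log (P/ν) ∈ T`. -/
def expFam [Fintype X] (ν : X → ℝ) (T : Submodule ℝ (X → ℝ)) : Set (X → ℝ) :=
  {P | (∀ x, 0 < P x) ∧ ∑ x, P x = 1 ∧ (fun x => Real.log (P x / ν x)) ∈ T}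

/-- `sup_P inf_{Q ∈ E} D(P‖Q)`, supremum over all probability distributions `P`. -/
def maxDiv [Fintype X] (E : Set (X → ℝ)) : EReal :=
  ⨆ P ∈ {P : X → ℝ | IsProb P}, ⨅ Q ∈ E, KL P Q

/-- The orthogonal complement of `T` in `ℝ^X` w.r.t. the standard inner product
(the normal space of the exponential family with extended tangent space `T`). -/
def orthSpace [Fintype X] (T : Submodule ℝ (X → ℝ)) : Set (X → ℝ) :=
  {u | ∀ t ∈ T, ∑ x, u x * t x = 0}

/-- A circuit vector of a set `N ⊆ ℝ^X`: a nonzero element whose support is minimal,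
i.e. every `u ∈ N` with `supp u ⊆ supp v` is a scalar multiple of `v`. -/
def IsCircuitVector (N : Set (X → ℝ)) (v : X → ℝ) : Prop :=
  v ∈ N ∧ v ≠ 0 ∧ ∀ u ∈ N, Function.support u ⊆ Function.support v → ∃ α : ℝ, u = α • v

/-- A circuit of `N`: the support of a circuit vector. -/
def IsCircuit (N : Set (X → ℝ)) (σ : Set X) : Prop :=
  ∃ v, IsCircuitVector N v ∧ σ = Function.support v

/-- The closed partition model of the partition given by the equivalence relation `r`:
all probability distributions constant on each block. -/
def partModel [Fintype X] (r : X → X → Prop) : Set (X → ℝ) :=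
  {Q | IsProb Q ∧ ∀ x y, r x y → Q x = Q y}

/-- The partition exponential family of the partition given by the equivalence
relation `r`: all strictly positive probability distributions constant on each block. -/
def partExpFam [Fintype X] (r : X → X → Prop) : Set (X → ℝ) :=
  {P | (∀ x, 0 < P x) ∧ ∑ x, P x = 1 ∧ ∀ x y, r x y → P x = P y}

/-- The set `X̲` of points not annihilated by all of `N`. -/
def underlineSet (N : Set (X → ℝ)) : Set X := {x | ∃ v ∈ N, v x ≠ 0}

/-- The relation `x ∼ y` : every `v ∈ N` with `v x ≠ 0` has `v y ≠ 0`. -/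
def coRel (N : Set (X → ℝ)) (x y : X) : Prop := ∀ v ∈ N, v x ≠ 0 → v y ≠ 0

/-- `Z` is an equivalence class of `∼` on `X̲`. -/
def IsClassOf (N : Set (X → ℝ)) (Z : Set X) : Prop :=
  ∃ x ∈ underlineSet N, Z = {y | coRel N x y}

end

open Finset

/-- avoidance of finitely many nonzero functionals -/
private lemma exists_forall_ne_zero {V : Type*} [AddCommGroup V] [Module ℝ V] {ι : Type*}
    (s : Finset ι) (f : ι → V →ₗ[ℝ] ℝ) (hf : ∀ i ∈ s, f i ≠ 0) :
    ∃ v : V, ∀ i ∈ s, f i v ≠ 0 := by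
  classical
  induction s using Finset.induction with
  | empty => exact ⟨0, by simp⟩
  | @insert a s ha ih =>
    obtain ⟨v, hv⟩ := ih (fun i hi => hf i (mem_insert_of_mem hi))
    obtain ⟨z, hz⟩ := DFunLike.ne_iff.mp (hf a (mem_insert_self a s))
    simp only [LinearMap.zero_apply] at hz
    set B : Finset ℝ := (insert a s).image (fun i => -f i v / f i z) with hB
    obtain ⟨t, ht⟩ := Infinite.exists_notMem_finset B
    refine ⟨v + t • z, fun i hi => ?_⟩
    rw [map_add, map_smul, smul_eq_mul]
    by_cases hiz : f i z = 0
    · rcases mem_insert.mp hi with rfl | his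
      · exact absurd hiz hz
      · simpa [hiz] using hv i his
    · intro hcon
      apply ht
      rw [hB, mem_image]
      refine ⟨i, hi, ?_⟩
      field_simp
      linarith [hcon]

private lemma three_class_absurd {l m : ℝ} (hl : l ≠ 0) (hm : m ≠ 0)
    (hsum : 1 + l + m = 0) (hphi : l * Real.log l + m * Real.log m = 0) : False := by
  rcases lt_or_gt_of_ne hl with hl' | hl' <;> rcases lt_or_gt_of_ne hm with hm' | hm'
  · -- both negative
    have h1 : -l < 1 := by linarith
    have h2 : -m < 1 := by linarith
    have hl0 : (0:ℝ) < -l := by linarith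
    have hm0 : (0:ℝ) < -m := by linarith
    have := Real.log_neg hl0 h1  -- log (-l) < 0
    have := Real.log_neg hm0 h2
    rw [← Real.log_neg_eq_log l, ← Real.log_neg_eq_log m] at hphi
    nlinarith
  · -- l < 0 < m : then -l = 1 + m > 1
    have hl1 : (1:ℝ) < -l := by linarith
    rw [← Real.log_neg_eq_log l] at hphi
    have hlog1 : 0 < Real.log (-l) := Real.log_pos hl1
    have hlogm : Real.log m < Real.log (-l) := Real.log_lt_log hm' (by linarith)
    nlinarith
  · -- m < 0 < l
    have hm1 : (1:ℝ) < -m := by linarith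
    rw [← Real.log_neg_eq_log m] at hphi
    have hlog1 : 0 < Real.log (-m) := Real.log_pos hm1
    have hlogl : Real.log l < Real.log (-m) := Real.log_lt_log hl' (by linarith)
    nlinarith
  · linarith

private lemma gibbs {X : Type*} [Fintype X] (S : Finset X) (p q : X → ℝ)
    (hp : ∀ x ∈ S, 0 < p x) (hq : ∀ x ∈ S, 0 < q x) (hp1 : ∑ x ∈ S, p x = 1) :
    -Real.log (∑ x ∈ S, q x) ≤ ∑ x ∈ S, p x * Real.log (p x / q x) := by
  have hSne : S.Nonempty := by
    rcases S.eq_empty_or_nonempty with rfl | h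
    · simp at hp1
    · exact h
  set s := ∑ x ∈ S, q x with hs
  have hs0 : 0 < s := Finset.sum_pos hq hSne
  have key : ∀ x ∈ S, p x - q x / s ≤ p x * Real.log (p x / q x) + p x * Real.log s := by
    intro x hx
    have hpx := hp x hx
    have hqx := hq x hx
    have h := Real.log_le_sub_one_of_pos (show 0 < q x / (s * p x) by positivity)
    rw [Real.log_div (by positivity) (by positivity), Real.log_mul (by positivity) (by positivity)] at h
    rw [Real.log_div (by positivity) (by positivity)]
    have h2 : q x / (s * p x) * p x = q x / s := by field_simp
    nlinarith [mul_le_mul_of_nonneg_left h (le_of_lt hpx)]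
  have hsum := Finset.sum_le_sum key
  rw [Finset.sum_sub_distrib, Finset.sum_add_distrib, ← Finset.sum_div, ← hs,
    div_self (ne_of_gt hs0), ← Finset.sum_mul, hp1] at hsum
  linarith

private lemma psi_zero {X : Type*} [Fintype X] (D : Submodule ℝ (X → ℝ))
    (hphi : ∀ u ∈ D, ∑ x, u x * Real.log (u x) = 0)
    (hsum : ∀ u ∈ D, ∑ x, u x = 0)
    (v w : X → ℝ) (hv : v ∈ D) (hw : w ∈ D)
    (hnz : ∀ x, w x ≠ 0 → v x ≠ 0) :
    ∑ x, w x * Real.log (v x) = 0 := by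
  have hG : ∀ t : ℝ, ∑ x, (v x + t * w x) * Real.log (v x + t * w x) = 0 := by
    intro t
    have h := hphi (v + t • w) (D.add_mem hv (D.smul_mem t hw))
    simpa using h
  have hderiv : HasDerivAt (fun t : ℝ => ∑ x, (v x + t * w x) * Real.log (v x + t * w x))
      (∑ x, w x * (Real.log (v x) + 1)) 0 := by
    apply HasDerivAt.fun_sum
    intro x _
    by_cases hwx : w x = 0
    · simp only [hwx, zero_mul, mul_zero, add_zero]
      exact hasDerivAt_const 0 _
    · have hvx := hnz x hwx
      have h1 : HasDerivAt (fun t : ℝ => v x + t * w x) (w x) 0 := by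
        simpa using ((hasDerivAt_id (0 : ℝ)).mul_const (w x)).const_add (v x)
      have h2 := (Real.hasDerivAt_mul_log (by simpa using hvx :
          v x + (0 : ℝ) * w x ≠ 0)).comp 0 h1
      simpa [mul_comm, Function.comp_def] using h2
  have hzero : HasDerivAt (fun t : ℝ => ∑ x, (v x + t * w x) * Real.log (v x + t * w x)) 0 0 := by
    have h : (fun t : ℝ => ∑ x, (v x + t * w x) * Real.log (v x + t * w x)) = fun _ => (0:ℝ) :=
      funext hG
    rw [h]
    exact hasDerivAt_const 0 0
  have huniq := hderiv.unique hzero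
  have hsw := hsum w hw
  have hexp : ∑ x, w x * (Real.log (v x) + 1) = ∑ x, w x * Real.log (v x) + ∑ x, w x := by
    rw [← Finset.sum_add_distrib]
    exact Finset.sum_congr rfl (fun x _ => by ring)
  rw [hexp, hsw] at huniq
  linarith

private lemma fiber_sum_zero {X : Type*} [Fintype X] (D : Submodule ℝ (X → ℝ))
    (hphi : ∀ u ∈ D, ∑ x, u x * Real.log (u x) = 0)
    (hsum : ∀ u ∈ D, ∑ x, u x = 0)
    (u v w : X → ℝ) (hu : u ∈ D) (hv : v ∈ D) (hw : w ∈ D)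
    (hnz : ∀ x, u x ≠ 0 → (v x ≠ 0 ∨ w x ≠ 0)) (ρ : ℝ) :
    ∑ x ∈ univ.filter (fun x => w x ≠ 0 ∧ v x = ρ * w x), u x = 0 := by
  classical
  set B : Finset ℝ :=
    (univ.filter (fun x => u x ≠ 0 ∧ w x ≠ 0)).image (fun x => -(v x / w x)) with hB
  have hBgood : ∀ t : ℝ, t ∉ B → ∀ x, u x ≠ 0 → v x + t * w x ≠ 0 := by
    intro t ht x hux hcon
    by_cases hwx : w x = 0
    · rcases hnz x hux with hvx | hwx2
      · rw [hwx, mul_zero, add_zero] at hcon; exact hvx hcon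
      · exact hwx2 hwx
    · apply ht
      rw [hB, mem_image]
      refine ⟨x, by simp [hux, hwx], ?_⟩
      field_simp
      linarith
  have hH : ∀ t : ℝ, t ∉ B → ∑ x, u x * Real.log (v x + t * w x) = 0 := by
    intro t ht
    have h := psi_zero D hphi hsum (v + t • w) u (D.add_mem hv (D.smul_mem t hw)) hu
      (fun x hux => hBgood t ht x hux)
    simpa using h
  have hR : ∀ t : ℝ, t ∉ B → ∑ x, u x * w x / (v x + t * w x) = 0 := by
    intro t ht
    have hd : HasDerivAt (fun s : ℝ => ∑ x, u x * Real.log (v x + s * w x))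
        (∑ x, u x * w x / (v x + t * w x)) t := by
      apply HasDerivAt.fun_sum
      intro x _
      by_cases hux : u x = 0
      · simp only [hux, zero_mul, zero_div]
        exact hasDerivAt_const t _
      · have hne : v x + t * w x ≠ 0 := hBgood t ht x hux
        have h1 : HasDerivAt (fun s : ℝ => v x + s * w x) (w x) t := by
          simpa using ((hasDerivAt_id (t : ℝ)).mul_const (w x)).const_add (v x)
        have h2 := ((Real.hasDerivAt_log hne).comp t h1).const_mul (u x)
        convert h2 using 1
        · rfl
        · rfl
        · ring
    have hopen : IsOpen ((↑B : Set ℝ)ᶜ) := (B.finite_toSet).isClosed.isOpen_compl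
    have h0 : HasDerivAt (fun s : ℝ => ∑ x, u x * Real.log (v x + s * w x)) 0 t := by
      refine (hasDerivAt_const t (0:ℝ)).congr_of_eventuallyEq ?_
      exact Filter.eventuallyEq_of_mem (hopen.mem_nhds (by simpa using ht))
        (fun s hs => hH s (by simpa using hs))
    exact hd.unique h0 ▸ rfl
  -- now the limit argument
  set A : Finset X := univ.filter (fun x => w x ≠ 0 ∧ v x = ρ * w x) with hA
  set t0 : ℝ := -ρ with ht0
  set g : ℝ → ℝ := fun t => ∑ x ∈ univ \ A, u x * w x / (v x + t * w x) with hg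
  have hgcont : ContinuousAt g t0 := by
    have hterm : ∀ x ∈ univ \ A,
        ContinuousAt (fun t : ℝ => u x * w x / (v x + t * w x)) t0 := by
      intro x hx
      by_cases hwx : w x = 0
      · have heq : (fun t : ℝ => u x * w x / (v x + t * w x)) = fun _ => (0:ℝ) := by
          funext t; rw [hwx]; simp
        rw [heq]
        exact continuousAt_const
      · have hvx : v x ≠ ρ * w x := by
          intro hcon
          rw [mem_sdiff] at hx
          exact hx.2 (by simp [hA, hwx, hcon])
        have hne : v x + t0 * w x ≠ 0 := by
          rw [ht0]
          intro hcon
          apply hvx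
          linarith
        exact (continuousAt_const.div (by fun_prop) hne)
    exact tendsto_finset_sum _ hterm
  have hkey : ∀ t : ℝ, t ∉ B → t ≠ t0 →
      (∑ x ∈ A, u x) + (t - t0) * g t = 0 := by
    intro t htB htne
    have hsplit : ∑ x, u x * w x / (v x + t * w x)
        = ∑ x ∈ A, u x * w x / (v x + t * w x) + g t := by
      rw [hg]
      rw [← Finset.sum_sdiff (Finset.subset_univ A)]
      ring
    have hAterm : ∀ x ∈ A, u x * w x / (v x + t * w x) = u x / (t - t0) := by
      intro x hx
      rw [hA, mem_filter] at hx
      obtain ⟨-, hwx, hvx⟩ := hx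
      rw [hvx]
      rw [show ρ * w x + t * w x = w x * (t - t0) from by rw [ht0]; ring]
      rw [div_eq_div_iff (by
        intro hcon
        rcases mul_eq_zero.mp hcon with h | h
        · exact hwx h
        · exact htne (by linarith)) (by
        intro hcon
        exact htne (by linarith))]
      ring
    have hRt := hR t htB
    rw [hsplit, Finset.sum_congr rfl hAterm, ← Finset.sum_div] at hRt
    have htne' : t - t0 ≠ 0 := fun hcon => htne (by linarith)
    have h3 : (∑ x ∈ A, u x) / (t - t0) * (t - t0) + g t * (t - t0) = 0 := by
      rw [← add_mul, hRt, zero_mul]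
    rw [div_mul_cancel₀ _ htne'] at h3
    linarith
  -- F is continuous at t0 with value ∑_A u, and eventually 0 on punctured nbhd
  set F : ℝ → ℝ := fun t => (∑ x ∈ A, u x) + (t - t0) * g t with hF
  have hFcont : Filter.Tendsto F (nhdsWithin t0 {t0}ᶜ) (nhds (∑ x ∈ A, u x)) := by
    have h1 : ContinuousAt F t0 := by
      apply ContinuousAt.add continuousAt_const
      exact ContinuousAt.mul (by fun_prop) hgcont
    have h2 : F t0 = ∑ x ∈ A, u x := by rw [hF]; simp
    rw [← h2]
    exact h1.continuousWithinAt.tendsto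
  have hFzero : Filter.Tendsto F (nhdsWithin t0 {t0}ᶜ) (nhds 0) := by
    apply Filter.Tendsto.congr' _ tendsto_const_nhds
    have h1 : ∀ᶠ t in nhds t0, t ∉ (B.erase t0 : Finset ℝ) := by
      have hcl : IsOpen (↑(B.erase t0) : Set ℝ)ᶜ :=
        ((B.erase t0).finite_toSet).isClosed.isOpen_compl
      exact hcl.mem_nhds (by simp)
    have h2 : ∀ᶠ t in nhdsWithin t0 {t0}ᶜ, t ∉ (B.erase t0 : Finset ℝ) :=
      Filter.Eventually.filter_mono nhdsWithin_le_nhds h1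
    filter_upwards [h2, self_mem_nhdsWithin] with t ht htne
    symm
    refine hkey t ?_ htne
    intro htB
    exact ht (Finset.mem_erase.mpr ⟨htne, htB⟩)
  exact tendsto_nhds_unique hFcont hFzero

private lemma partner_exists {X : Type*} [Fintype X] (D : Submodule ℝ (X → ℝ))
    (hphi : ∀ u ∈ D, ∑ x, u x * Real.log (u x) = 0)
    (hsum : ∀ u ∈ D, ∑ x, u x = 0)
    (x0 : X) (u0 : X → ℝ) (hu0 : u0 ∈ D) (hx0 : u0 x0 ≠ 0) :
    ∃ y, y ≠ x0 ∧ ∃ c : ℝ, c ≠ 0 ∧ ∀ v ∈ D, v y = c * v x0 := by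
  classical
  by_contra hcon
  push_neg at hcon
  -- hcon : ∀ y, y ≠ x0 → ∀ c, c ≠ 0 → ∃ v ∈ D, v y ≠ c * v x0
  set Xu : Finset X := univ.filter (fun x => ∃ v ∈ D, v x ≠ 0) with hXu
  have hx0Xu : x0 ∈ Xu := by simp [hXu]; exact ⟨u0, hu0, hx0⟩
  have hoffXu : ∀ v ∈ D, ∀ x, x ∉ Xu → v x = 0 := by
    intro v hv x hx
    by_contra h
    exact hx (by simp [hXu]; exact ⟨v, hv, h⟩)
  -- a vector v ∈ D nonvanishing on Xu
  have hev : ∀ x ∈ Xu, (LinearMap.proj x).comp D.subtype ≠ 0 := by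
    intro x hx
    simp only [hXu, mem_filter, mem_univ, true_and] at hx
    obtain ⟨v, hv, hvx⟩ := hx
    intro hzero
    have := DFunLike.congr_fun hzero ⟨v, hv⟩
    simp [LinearMap.proj] at this
    exact hvx this
  obtain ⟨vD, hvD⟩ := exists_forall_ne_zero Xu (fun x => (LinearMap.proj x).comp D.subtype) hev
  set v : X → ℝ := (vD : X → ℝ) with hvdef
  have hvne : ∀ x ∈ Xu, v x ≠ 0 := by
    intro x hx
    have := hvD x hx
    simpa using this
  -- functionals for w
  set S : Finset X := univ.filter (fun x => u0 x ≠ 0) with hS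
  have hSXu : S ⊆ Xu := by
    intro x hx
    simp only [hS, mem_filter, mem_univ, true_and] at hx
    simp [hXu]
    exact ⟨u0, hu0, hx⟩
  set f : X → (↥D →ₗ[ℝ] ℝ) := fun y =>
    if y = x0 then (LinearMap.proj x0).comp D.subtype
    else v y • ((LinearMap.proj x0).comp D.subtype) - v x0 • ((LinearMap.proj y).comp D.subtype)
    with hf
  have hfne : ∀ y ∈ S, f y ≠ 0 := by
    intro y hy
    by_cases hyx : y = x0
    · rw [hf]; simp only [hyx, if_pos rfl]
      exact hev x0 hx0Xu
    · rw [hf]; simp only [if_neg hyx]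
      intro hzero
      have hyXu : y ∈ Xu := hSXu hy
      have hvy := hvne y hyXu
      have hvx0 := hvne x0 hx0Xu
      have hcall : ∀ w ∈ D, v y * w x0 - v x0 * w y = 0 := by
        intro w hw
        have := DFunLike.congr_fun hzero ⟨w, hw⟩
        simpa [LinearMap.proj, smul_eq_mul] using this
      -- then y is a partner of x0 with c = v y / v x0
      obtain ⟨w, hw, hwne⟩ := hcon y hyx (v y / v x0) (div_ne_zero hvy hvx0)
      apply hwne
      have := hcall w hw
      field_simp
      linarith
  obtain ⟨wD, hwD⟩ := exists_forall_ne_zero S f hfne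
  set w : X → ℝ := (wD : X → ℝ) with hwdef
  have hwx0 : w x0 ≠ 0 := by
    have := hwD x0 (by simp [hS]; exact hx0)
    rw [hf] at this
    simpa using this
  have hwsep : ∀ y ∈ S, y ≠ x0 → v y * w x0 - v x0 * w y ≠ 0 := by
    intro y hy hyx
    have := hwD y hy
    rw [hf] at this
    simp only [if_neg hyx] at this
    intro hcon2
    apply this
    simp [LinearMap.proj, smul_eq_mul]
    linarith
  -- apply fiber_sum_zero
  have hnz : ∀ x, u0 x ≠ 0 → (v x ≠ 0 ∨ w x ≠ 0) := by
    intro x hx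
    left
    exact hvne x (hSXu (by simp [hS]; exact hx))
  have hfib := fiber_sum_zero D hphi hsum u0 v w hu0 vD.2 wD.2 hnz (v x0 / w x0)
  set A : Finset X := univ.filter (fun x => w x ≠ 0 ∧ v x = v x0 / w x0 * w x) with hA
  have hx0A : x0 ∈ A := by
    rw [hA, mem_filter]
    refine ⟨mem_univ _, hwx0, ?_⟩
    field_simp
  have hsingle : ∑ x ∈ A, u0 x = u0 x0 := by
    apply Finset.sum_eq_single_of_mem x0 hx0A
    intro y hyA hyx
    by_contra hy0
    have hyS : y ∈ S := by simp [hS]; exact hy0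
    have := hwsep y hyS hyx
    simp only [hA, mem_filter, mem_univ, true_and] at hyA
    obtain ⟨hwy, hvy⟩ := hyA
    apply this
    rw [hvy]
    field_simp
    all_goals ring
  rw [hfib] at hsingle
  exact hx0 hsingle.symm

private lemma phi_le {X : Type*} [Fintype X] (ν : X → ℝ) (T : Submodule ℝ (X → ℝ))
    (hmax : maxDiv (expFam ν T) = ((Real.log 2 : ℝ) : EReal))
    (v : X → ℝ) (hv : ∀ Q ∈ expFam ν T, ∑ x, v x * Real.log (Q x) = 0)
    (hv0 : ∑ x, v x = 0) (hvne : v ≠ 0) :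
    ∑ x, v x * Real.log (v x) ≤ 0 := by
  classical
  set pos : Finset X := univ.filter (fun x => 0 < v x) with hposdef
  set neg : Finset X := univ.filter (fun x => v x < 0) with hnegdef
  have hposmem : ∀ x, x ∈ pos ↔ 0 < v x := by
    intro x; simp [hposdef]
  have hnegmem : ∀ x, x ∈ neg ↔ v x < 0 := by
    intro x; simp [hnegdef]
  have hsplit_univ : ∀ (f : X → ℝ), (∀ x, v x = 0 → f x = 0) →
      ∑ x, f x = ∑ x ∈ pos, f x + ∑ x ∈ neg, f x := by
    intro f hf
    rw [← Finset.sum_filter_add_sum_filter_not univ (fun x => 0 < v x)]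
    congr 1
    symm
    apply Finset.sum_subset
    · intro x hx
      simp only [mem_filter, mem_univ, true_and] at hx ⊢
      rw [hnegmem] at hx
      linarith
    · intro x hx hx2
      simp only [mem_filter, mem_univ, true_and, not_lt] at hx
      rw [hnegmem, not_lt] at hx2
      exact hf x (le_antisymm hx hx2)
  have hposne : pos.Nonempty := by
    by_contra h
    rw [Finset.not_nonempty_iff_eq_empty] at h
    apply hvne
    funext x
    have h1 : v x ≤ 0 := by
      have : x ∉ pos := by simp [h]
      rw [hposmem, not_lt] at this; exact this
    exact (Finset.sum_eq_zero_iff_of_nonpos (fun y _ => by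
      by_contra hy
      push_neg at hy
      have : y ∈ pos := (hposmem y).mpr hy
      simp [h] at this)).mp hv0 x (mem_univ x)
  have hnegne : neg.Nonempty := by
    by_contra h
    rw [Finset.not_nonempty_iff_eq_empty] at h
    apply hvne
    funext x
    exact (Finset.sum_eq_zero_iff_of_nonneg (fun y _ => by
      by_contra hy
      push_neg at hy
      have : y ∈ neg := (hnegmem y).mpr hy
      simp [h] at this)).mp hv0 x (mem_univ x)
  have hsplit : ∑ x ∈ pos, v x + ∑ x ∈ neg, v x = 0 := by
    rw [← hsplit_univ v (fun x h => h)]; exact hv0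
  have hapos : 0 < ∑ x ∈ pos, v x :=
    Finset.sum_pos (fun x hx => (hposmem x).mp hx) hposne
  set a := ∑ x ∈ pos, v x with ha
  have hdisj : Disjoint pos neg := by
    rw [Finset.disjoint_left]
    intro x hx hx2
    rw [hposmem] at hx; rw [hnegmem] at hx2
    linarith
  set P : X → ℝ := fun x => max (v x) 0 / a with hP
  have hPpos : ∀ x ∈ pos, 0 < P x := by
    intro x hx
    rw [hposmem] at hx
    have hm : max (v x) 0 = v x := max_eq_left hx.le
    show 0 < max (v x) 0 / a
    rw [hm]; exact div_pos hx hapos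
  have hPzero : ∀ x, x ∉ pos → P x = 0 := by
    intro x hx
    rw [hposmem, not_lt] at hx
    show max (v x) 0 / a = 0
    rw [max_eq_right hx, zero_div]
  have hPval : ∀ x ∈ pos, P x = v x / a := by
    intro x hx
    rw [hposmem] at hx
    show max (v x) 0 / a = v x / a
    rw [max_eq_left hx.le]
  have hP1 : ∑ x ∈ pos, P x = 1 := by
    rw [Finset.sum_congr rfl hPval, ← Finset.sum_div, ← ha, div_self hapos.ne']
  have hPuniv : ∑ x, P x = 1 := by
    rw [← hP1]
    symm
    apply Finset.sum_subset (Finset.subset_univ _)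
    intro x _ hx
    exact hPzero x hx
  set Pm : X → ℝ := fun x => max (-v x) 0 / a with hPm
  have hPmval : ∀ x ∈ neg, Pm x = -v x / a := by
    intro x hx
    rw [hnegmem] at hx
    show max (-v x) 0 / a = -v x / a
    rw [max_eq_left (by linarith)]
  have hPmpos : ∀ x ∈ neg, 0 < Pm x := by
    intro x hx
    rw [hPmval x hx]
    rw [hnegmem] at hx
    exact div_pos (by linarith) hapos
  have hPm1 : ∑ x ∈ neg, Pm x = 1 := by
    rw [Finset.sum_congr rfl hPmval, ← Finset.sum_div]
    have : ∑ x ∈ neg, -v x = a := by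
      rw [Finset.sum_neg_distrib]; linarith
    rw [this, div_self hapos.ne']
  set Δ := (∑ x, v x * Real.log (v x)) / a with hΔ
  have hvlog_univ : ∑ x, v x * Real.log (v x)
      = ∑ x ∈ pos, v x * Real.log (v x) + ∑ x ∈ neg, v x * Real.log (v x) :=
    hsplit_univ _ (fun x h => by rw [h, zero_mul])
  have hdiff : ∑ x ∈ pos, P x * Real.log (P x) - ∑ x ∈ neg, Pm x * Real.log (Pm x) = Δ := by
    have s1 : ∑ x ∈ pos, P x * Real.log (P x)
        = (∑ x ∈ pos, v x * Real.log (v x)) / a - Real.log a := by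
      have e1 : ∀ x ∈ pos, P x * Real.log (P x)
          = v x * Real.log (v x) / a - v x / a * Real.log a := by
        intro x hx
        have hxv := (hposmem x).mp hx
        rw [hPval x hx, Real.log_div hxv.ne' hapos.ne']
        ring
      rw [Finset.sum_congr rfl e1, Finset.sum_sub_distrib, ← Finset.sum_div, ← Finset.sum_mul,
        ← Finset.sum_div, ← ha, div_self hapos.ne', one_mul]
    have s2 : ∑ x ∈ neg, Pm x * Real.log (Pm x)
        = (-∑ x ∈ neg, v x * Real.log (v x)) / a - Real.log a := by
      have e2 : ∀ x ∈ neg, Pm x * Real.log (Pm x)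
          = -(v x * Real.log (v x)) / a - (-v x / a) * Real.log a := by
        intro x hx
        have hxv := (hnegmem x).mp hx
        rw [hPmval x hx, Real.log_div (by linarith : -v x ≠ 0) hapos.ne',
          Real.log_neg_eq_log]
        ring
      rw [Finset.sum_congr rfl e2, Finset.sum_sub_distrib, ← Finset.sum_div, ← Finset.sum_mul,
        ← Finset.sum_div, Finset.sum_neg_distrib, Finset.sum_neg_distrib]
      have hnegsum : -∑ x ∈ neg, v x = a := by linarith
      rw [hnegsum, div_self hapos.ne', one_mul]
    rw [s1, s2, hΔ, hvlog_univ]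
    field_simp
    ring
  have key : ∀ Q ∈ expFam ν T, Real.log (1 + Real.exp Δ) ≤ ∑ x, P x * Real.log (P x / Q x) := by
    intro Q hQ
    have h0 := hv Q hQ
    obtain ⟨hQpos, hQ1, -⟩ := hQ
    have hsp : 0 < ∑ x ∈ pos, Q x := Finset.sum_pos (fun x _ => hQpos x) hposne
    have hsn : 0 < ∑ x ∈ neg, Q x := Finset.sum_pos (fun x _ => hQpos x) hnegne
    have hsum1 : ∑ x ∈ pos, Q x + ∑ x ∈ neg, Q x ≤ 1 := by
      rw [← hQ1, ← Finset.sum_union hdisj]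
      exact Finset.sum_le_sum_of_subset_of_nonneg (Finset.subset_univ _)
        (fun x _ _ => (hQpos x).le)
    have hrestr : ∑ x, P x * Real.log (P x / Q x) = ∑ x ∈ pos, P x * Real.log (P x / Q x) := by
      symm
      apply Finset.sum_subset (Finset.subset_univ _)
      intro x _ hx
      rw [hPzero x hx, zero_mul]
    have b1 : -Real.log (∑ x ∈ pos, Q x) ≤ ∑ x, P x * Real.log (P x / Q x) := by
      rw [hrestr]
      exact gibbs pos P Q hPpos (fun x _ => hQpos x) hP1
    have hPQ : ∑ x ∈ pos, P x * Real.log (Q x) = ∑ x ∈ neg, Pm x * Real.log (Q x) := by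
      have e5 : ∑ x ∈ pos, v x * Real.log (Q x) + ∑ x ∈ neg, v x * Real.log (Q x) = 0 := by
        rw [← hsplit_univ (fun x => v x * Real.log (Q x)) (fun x h => by simp [h])]
        exact h0
      have e3 : ∑ x ∈ pos, P x * Real.log (Q x) = (∑ x ∈ pos, v x * Real.log (Q x)) / a := by
        rw [Finset.sum_div]
        exact Finset.sum_congr rfl (fun x hx => by rw [hPval x hx]; ring)
      have e4 : ∑ x ∈ neg, Pm x * Real.log (Q x) = (-∑ x ∈ neg, v x * Real.log (Q x)) / a := by
        rw [neg_div, Finset.sum_div, ← Finset.sum_neg_distrib]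
        exact Finset.sum_congr rfl (fun x hx => by rw [hPmval x hx]; ring)
      rw [e3, e4]
      congr 1
      linarith
    have hexpand : ∑ x ∈ pos, P x * Real.log (P x / Q x)
        = ∑ x ∈ pos, P x * Real.log (P x) - ∑ x ∈ pos, P x * Real.log (Q x) := by
      rw [← Finset.sum_sub_distrib]
      exact Finset.sum_congr rfl (fun x hx => by
        rw [Real.log_div (hPpos x hx).ne' (hQpos x).ne']; ring)
    have hgib2 := gibbs neg Pm Q hPmpos (fun x _ => hQpos x) hPm1
    have hexpand2 : ∑ x ∈ neg, Pm x * Real.log (Pm x / Q x)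
        = ∑ x ∈ neg, Pm x * Real.log (Pm x) - ∑ x ∈ neg, Pm x * Real.log (Q x) := by
      rw [← Finset.sum_sub_distrib]
      exact Finset.sum_congr rfl (fun x hx => by
        rw [Real.log_div (hPmpos x hx).ne' (hQpos x).ne']; ring)
    rw [hexpand2] at hgib2
    have b2 : Δ - Real.log (∑ x ∈ neg, Q x) ≤ ∑ x, P x * Real.log (P x / Q x) := by
      rw [hrestr, hexpand, hPQ]
      linarith
    by_contra hcon
    push_neg at hcon
    have hc1 : Real.exp (-Real.log (1 + Real.exp Δ)) < ∑ x ∈ pos, Q x := by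
      have h1 : -Real.log (∑ x ∈ pos, Q x) < Real.log (1 + Real.exp Δ) := lt_of_le_of_lt b1 hcon
      calc Real.exp (-Real.log (1 + Real.exp Δ)) < Real.exp (Real.log (∑ x ∈ pos, Q x)) :=
            Real.exp_lt_exp.mpr (by linarith)
        _ = ∑ x ∈ pos, Q x := Real.exp_log hsp
    have hc2 : Real.exp (Δ - Real.log (1 + Real.exp Δ)) < ∑ x ∈ neg, Q x := by
      have h1 : Δ - Real.log (∑ x ∈ neg, Q x) < Real.log (1 + Real.exp Δ) := lt_of_le_of_lt b2 hcon
      calc Real.exp (Δ - Real.log (1 + Real.exp Δ)) < Real.exp (Real.log (∑ x ∈ neg, Q x)) :=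
            Real.exp_lt_exp.mpr (by linarith)
        _ = ∑ x ∈ neg, Q x := Real.exp_log hsn
    have hval : Real.exp (-Real.log (1 + Real.exp Δ)) + Real.exp (Δ - Real.log (1 + Real.exp Δ)) = 1 := by
      rw [Real.exp_sub, Real.exp_neg, Real.exp_log (by positivity)]
      field_simp
    linarith
  have hProb : P ∈ {P : X → ℝ | IsProb P} :=
    ⟨fun x => div_nonneg (le_max_right _ _) hapos.le, hPuniv⟩
  have h1 : ((Real.log (1 + Real.exp Δ) : ℝ) : EReal) ≤ ⨅ Q ∈ expFam ν T, KL P Q := by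
    refine le_iInf₂ fun Q hQ => ?_
    rw [KL, if_pos (fun x h => absurd h (hQ.1 x).ne')]
    exact_mod_cast key Q hQ
  have h2 : (⨅ Q ∈ expFam ν T, KL P Q) ≤ maxDiv (expFam ν T) :=
    le_iSup₂ (f := fun (P : X → ℝ) (_ : P ∈ {P : X → ℝ | IsProb P}) => ⨅ Q ∈ expFam ν T, KL P Q) P hProb
  have h3 : Real.log (1 + Real.exp Δ) ≤ Real.log 2 := by
    have h := le_trans h1 h2
    rw [hmax] at h
    exact_mod_cast h
  have h4 : Real.exp Δ ≤ 1 := by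
    have := (Real.log_le_log_iff (by positivity) (by norm_num)).mp h3
    linarith
  have h5 : Δ ≤ 0 := by
    by_contra h
    push_neg at h
    exact absurd h4 (by nlinarith [Real.add_one_le_exp Δ])
  have h6 : ∑ x, v x * Real.log (v x) = Δ * a := by
    rw [hΔ]; field_simp
  rw [h6]
  exact mul_nonpos_of_nonpos_of_nonneg h5 hapos.le

private lemma sum_pair_indicator {X : Type*} [Fintype X] [DecidableEq X] (a b : X) (hab : a ≠ b) (f : X → ℝ) :
    ∑ x, (if x = a then (1:ℝ) else if x = b then -1 else 0) * f x = f a - f b := by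
  classical
  have h1 : ∑ x, (if x = a then (1:ℝ) else if x = b then -1 else 0) * f x
      = ∑ x ∈ ({a, b} : Finset X), (if x = a then (1:ℝ) else if x = b then -1 else 0) * f x := by
    symm
    apply Finset.sum_subset (Finset.subset_univ _)
    intro x _ hx
    simp only [Finset.mem_insert, Finset.mem_singleton] at hx
    push_neg at hx
    rw [if_neg hx.1, if_neg hx.2, zero_mul]
  rw [h1, Finset.sum_pair hab, if_pos rfl, if_neg (Ne.symm hab), if_pos rfl]
  ring


set_option maxHeartbeats 2000000

/-- if `dim T = ⌈N/2⌉`, `sup_P inf_{Q ∈ E} D(P‖Q) = log 2` and `E`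
contains the uniform distribution, then `E` is a partition exponential family. -/
theorem stmt9 (X : Type*) [Fintype X] [Nonempty X]
    (ν : X → ℝ) (hν : ∀ x, 0 < ν x)
    (T : Submodule ℝ (X → ℝ)) (h1 : (fun _ => (1 : ℝ)) ∈ T)
    (hdim : Module.finrank ℝ T = (Fintype.card X + 1) / 2)
    (hmax : maxDiv (expFam ν T) = ((Real.log 2 : ℝ) : EReal))
    (hunif : (fun _ : X => ((Fintype.card X : ℝ))⁻¹) ∈ expFam ν T) :
    ∃ r : X → X → Prop, Equivalence r ∧ expFam ν T = partExpFam r := by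
  classical
  set N := Fintype.card X with hN
  -- Euclidean space transport
  set L : EuclideanSpace ℝ X ≃ₗ[ℝ] (X → ℝ) := WithLp.linearEquiv 2 ℝ (X → ℝ) with hL
  set T' : Submodule ℝ (EuclideanSpace ℝ X) := T.comap (L : EuclideanSpace ℝ X →ₗ[ℝ] (X → ℝ)) with hT'
  set D : Submodule ℝ (X → ℝ) := (T'ᗮ).map (L : EuclideanSpace ℝ X →ₗ[ℝ] (X → ℝ)) with hD
  have hinner : ∀ f g : EuclideanSpace ℝ X, (inner ℝ f g : ℝ) = ∑ x, f x * g x := by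
    intro f g
    rw [PiLp.inner_apply]
    exact Finset.sum_congr rfl (fun x _ => by simp [RCLike.inner_apply, mul_comm])
  have hLapp : ∀ (f : EuclideanSpace ℝ X) (x : X), L f x = f x := fun f x => rfl
  have hLsymm : ∀ (f : X → ℝ) (x : X), L.symm f x = f x := fun f x => rfl
  have hmemD0 : ∀ v : X → ℝ, (v ∈ D ↔ L.symm v ∈ T'ᗮ) := by
    intro v
    rw [hD, Submodule.mem_map]
    constructor
    · rintro ⟨u, hu, rfl⟩
      rwa [LinearEquiv.coe_coe, L.symm_apply_apply]
    · intro h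
      exact ⟨L.symm v, h, L.apply_symm_apply v⟩
  have hmemD : ∀ v : X → ℝ, (v ∈ D ↔ ∀ t ∈ T, ∑ x, v x * t x = 0) := by
    intro v
    rw [hmemD0, Submodule.mem_orthogonal]
    constructor
    · intro h t ht
      have h2 := h (L.symm t) (by
        rw [hT', Submodule.mem_comap]
        have : L (L.symm t) = t := L.apply_symm_apply t
        rwa [LinearEquiv.coe_coe, this])
      rw [hinner] at h2
      rw [← h2]
      exact Finset.sum_congr rfl (fun x _ => by rw [hLsymm, hLsymm, mul_comm])
    · intro h u hu
      rw [hinner]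
      have h2 := h (L u) (by rwa [hT', Submodule.mem_comap] at hu)
      rw [← h2]
      exact Finset.sum_congr rfl (fun x _ => by rw [hLapp, hLsymm, mul_comm])
  have hmemT : ∀ t : X → ℝ, (t ∈ T ↔ ∀ v ∈ D, ∑ x, v x * t x = 0) := by
    intro t
    constructor
    · intro ht v hv
      exact (hmemD v).mp hv t ht
    · intro h
      have htT' : L.symm t ∈ T'ᗮᗮ := by
        rw [Submodule.mem_orthogonal]
        intro u hu
        have h2 := h (L u) ((hmemD0 (L u)).mpr (by rwa [L.symm_apply_apply]))
        rw [hinner, ← h2]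
        exact Finset.sum_congr rfl (fun x _ => by rw [hLapp, hLsymm, mul_comm])
      rw [Submodule.orthogonal_orthogonal] at htT'
      rw [hT', Submodule.mem_comap] at htT'
      rwa [LinearEquiv.coe_coe, L.apply_symm_apply] at htT'
  have hcomap_eq : T' = Submodule.comap (L : EuclideanSpace ℝ X →ₗ[ℝ] (X → ℝ)) T := rfl
  have hmap_eq : D = Submodule.map (L : EuclideanSpace ℝ X →ₗ[ℝ] (X → ℝ)) T'ᗮ := rfl
  have hrkT' : Module.finrank ℝ T' = (N + 1) / 2 := by
    rw [hcomap_eq, (LinearEquiv.ofSubmodule' L T).finrank_eq]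
    exact hdim
  have hrkD : Module.finrank ℝ D = N - (N + 1) / 2 := by
    rw [hmap_eq, ← (L.submoduleMap T'ᗮ).finrank_eq]
    have h := Submodule.finrank_add_finrank_orthogonal T'
    rw [hrkT', finrank_euclideanSpace] at h
    omega
  -- log ν ∈ T
  have hlogν : (fun x => Real.log (ν x)) ∈ T := by
    obtain ⟨-, -, hu3⟩ := hunif
    have hNpos : (0:ℝ) < (N : ℝ) := by
      have := Fintype.card_pos (α := X)
      rw [hN]; exact_mod_cast this
    have heq : (fun x => Real.log (ν x))
        = (-Real.log N) • (fun _ : X => (1:ℝ)) - (fun x => Real.log ((N : ℝ)⁻¹ / ν x)) := by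
      funext x
      simp only [Pi.sub_apply, Pi.smul_apply, smul_eq_mul, mul_one]
      rw [Real.log_div (by positivity) (hν x).ne', Real.log_inv]
      ring
    rw [heq]
    exact Submodule.sub_mem T (Submodule.smul_mem T _ h1) hu3
  have hlogQ : ∀ Q ∈ expFam ν T, (fun x => Real.log (Q x)) ∈ T := by
    intro Q hQ
    have heq : (fun x => Real.log (Q x))
        = (fun x => Real.log (Q x / ν x)) + (fun x => Real.log (ν x)) := by
      funext x
      simp only [Pi.add_apply]
      rw [Real.log_div (hQ.1 x).ne' (hν x).ne']
      ring
    rw [heq]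
    exact Submodule.add_mem T hQ.2.2 hlogν
  have hsumD : ∀ v ∈ D, ∑ x, v x = 0 := by
    intro v hv
    have := (hmemD v).mp hv _ h1
    simpa using this
  have horth : ∀ v ∈ D, ∀ Q ∈ expFam ν T, ∑ x, v x * Real.log (Q x) = 0 := by
    intro v hv Q hQ
    exact (hmemD v).mp hv _ (hlogQ Q hQ)
  have hphiD : ∀ v ∈ D, ∑ x, v x * Real.log (v x) = 0 := by
    intro v hv
    by_cases hvz : v = 0
    · simp [hvz]
    have ha := phi_le ν T hmax v (horth v hv) (hsumD v hv) hvz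
    have hb := phi_le ν T hmax (-v) (fun Q hQ => by
        have h := horth v hv Q hQ
        have h2 : ∑ x, (-v) x * Real.log (Q x) = -∑ x, v x * Real.log (Q x) := by
          rw [← Finset.sum_neg_distrib]
          exact Finset.sum_congr rfl (fun x _ => by simp)
        rw [h2, h, neg_zero]) (by
        have h2 : ∑ x, (-v) x = -∑ x, v x := by
          rw [← Finset.sum_neg_distrib]
          exact Finset.sum_congr rfl (fun x _ => by simp)
        rw [h2, hsumD v hv, neg_zero]) (neg_ne_zero.mpr hvz)
    have hc : ∑ x, (-v) x * Real.log ((-v) x) = -∑ x, v x * Real.log (v x) := by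
      rw [← Finset.sum_neg_distrib]
      exact Finset.sum_congr rfl (fun x _ => by
        simp only [Pi.neg_apply, Real.log_neg_eq_log]
        ring)
    rw [hc] at hb
    linarith
  -- ================== combinatorial endgame ==================
  letI : LinearOrder X := LinearOrder.lift' (Fintype.equivFin X) (Fintype.equivFin X).injective
  set Xu : Finset X := univ.filter (fun x => ∃ v ∈ D, v x ≠ 0) with hXu
  have hXumem : ∀ x, x ∈ Xu ↔ ∃ v ∈ D, v x ≠ 0 := fun x => by simp [hXu]
  have hoff : ∀ v ∈ D, ∀ x, x ∉ Xu → v x = 0 := by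
    intro v hv x hx
    by_contra h
    exact hx ((hXumem x).mpr ⟨v, hv, h⟩)
  set Prt : X → X → Prop := fun a b => ∃ c : ℝ, c ≠ 0 ∧ ∀ v ∈ D, v a = c * v b with hPrtdef
  have hPrt_refl : ∀ a, Prt a a := fun a => ⟨1, one_ne_zero, fun v _ => by ring⟩
  have hPrt_symm : ∀ a b, Prt a b → Prt b a := by
    rintro a b ⟨c, hc, h⟩
    exact ⟨c⁻¹, inv_ne_zero hc, fun v hv => by rw [h v hv]; field_simp⟩
  have hPrt_trans : ∀ a b c, Prt a b → Prt b c → Prt a c := by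
    rintro a b c ⟨c1, hc1, h1⟩ ⟨c2, hc2, h2⟩
    exact ⟨c1 * c2, mul_ne_zero hc1 hc2, fun v hv => by rw [h1 v hv, h2 v hv]; ring⟩
  have hPrtXu : ∀ a b, a ∈ Xu → Prt b a → b ∈ Xu := by
    rintro a b ha ⟨c, hc, h⟩
    obtain ⟨v, hv, hva⟩ := (hXumem a).mp ha
    exact (hXumem b).mpr ⟨v, hv, by rw [h v hv]; exact mul_ne_zero hc hva⟩
  have hpartner : ∀ x ∈ Xu, ∃ y, y ≠ x ∧ Prt y x := by
    intro x hx
    obtain ⟨u, hu, hux⟩ := (hXumem x).mp hx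
    obtain ⟨y, hy, c, hc, hcall⟩ := partner_exists D hphiD hsumD x u hu hux
    exact ⟨y, hy, c, hc, hcall⟩
  set cls : X → Finset X := fun x => Xu.filter (fun y => Prt y x) with hcls
  have hclsmem : ∀ x y, y ∈ cls x ↔ (y ∈ Xu ∧ Prt y x) := fun x y => by simp [hcls]
  have hclsXu : ∀ x y, y ∈ cls x → y ∈ Xu := fun x y hy => ((hclsmem x y).mp hy).1
  have hcls_self : ∀ x ∈ Xu, x ∈ cls x := fun x hx => (hclsmem x x).mpr ⟨hx, hPrt_refl x⟩
  have hcls_eq : ∀ a b, Prt a b → cls a = cls b := by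
    intro a b hab
    ext y
    rw [hclsmem, hclsmem]
    constructor
    · rintro ⟨h1, h2⟩; exact ⟨h1, hPrt_trans y a b h2 hab⟩
    · rintro ⟨h1, h2⟩; exact ⟨h1, hPrt_trans y b a h2 (hPrt_symm a b hab)⟩
  have hcls_card2 : ∀ x ∈ Xu, 2 ≤ (cls x).card := by
    intro x hx
    obtain ⟨y, hyne, hy⟩ := hpartner x hx
    have h1 : x ∈ cls x := hcls_self x hx
    have h2 : y ∈ cls x := (hclsmem x y).mpr ⟨hPrtXu x y hx hy, hy⟩
    exact Finset.one_lt_card.mpr ⟨x, h1, y, h2, fun h => hyne h.symm⟩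
  set rep : X → X := fun x => if h : (cls x).Nonempty then (cls x).min' h else x with hrepdef
  have hrep_mem : ∀ x ∈ Xu, rep x ∈ cls x := by
    intro x hx
    have hne : (cls x).Nonempty := ⟨x, hcls_self x hx⟩
    show (if h : (cls x).Nonempty then (cls x).min' h else x) ∈ cls x
    rw [dif_pos hne]
    exact Finset.min'_mem _ hne
  have hrep_eq : ∀ a b, a ∈ Xu → Prt a b → rep a = rep b := by
    intro a b ha hab
    have hb : b ∈ Xu := hPrtXu a b ha (hPrt_symm a b hab)
    have hnea : (cls a).Nonempty := ⟨a, hcls_self a ha⟩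
    have hneb : (cls b).Nonempty := ⟨b, hcls_self b hb⟩
    show (if h : (cls a).Nonempty then (cls a).min' h else a)
        = (if h : (cls b).Nonempty then (cls b).min' h else b)
    rw [dif_pos hnea, dif_pos hneb]
    simp only [hcls_eq a b hab]
  have hrepXu : ∀ x ∈ Xu, rep x ∈ Xu := fun x hx => hclsXu x (rep x) (hrep_mem x hx)
  have hPrt_rep : ∀ x ∈ Xu, Prt (rep x) x := fun x hx => ((hclsmem x (rep x)).mp (hrep_mem x hx)).2
  have hrep_idem : ∀ x ∈ Xu, rep (rep x) = rep x := by
    intro x hx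
    exact hrep_eq (rep x) x (hrepXu x hx) (hPrt_rep x hx)
  set R : Finset X := Xu.image rep with hRdef
  have hRXu : ∀ r ∈ R, r ∈ Xu := by
    intro r hr
    obtain ⟨x, hx, rfl⟩ := Finset.mem_image.mp hr
    exact hrepXu x hx
  have hrep_fix : ∀ r ∈ R, rep r = r := by
    intro r hr
    obtain ⟨x, hx, rfl⟩ := Finset.mem_image.mp hr
    exact hrep_idem x hx
  have hfiber : ∀ r ∈ R, Xu.filter (fun x => rep x = r) = cls r := by
    intro r hr
    ext y
    rw [Finset.mem_filter, hclsmem]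
    constructor
    · rintro ⟨hy, hyr⟩
      refine ⟨hy, ?_⟩
      have h := hPrt_rep y hy
      rw [hyr] at h
      exact hPrt_symm r y h
    · rintro ⟨hy, hyr⟩
      exact ⟨hy, by rw [hrep_eq y r hy hyr, hrep_fix r hr]⟩
  set F : ↥D →ₗ[ℝ] ({r // r ∈ R} → ℝ) :=
    LinearMap.pi (fun r => (LinearMap.proj (r : X)).comp D.subtype) with hF
  have hFinj : Function.Injective F := by
    rw [← LinearMap.ker_eq_bot, Submodule.eq_bot_iff]
    rintro ⟨v, hv⟩ hker
    have hvz : ∀ r ∈ R, v r = 0 := by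
      intro r hr
      have h := congr_fun hker ⟨r, hr⟩
      simpa [hF, LinearMap.proj] using h
    have hv0 : v = 0 := by
      funext x
      by_cases hx : x ∈ Xu
      · obtain ⟨c, hc, hcall⟩ := hPrt_rep x hx
        have h1 := hcall v hv
        rw [hvz (rep x) (Finset.mem_image_of_mem rep hx)] at h1
        rcases mul_eq_zero.mp h1.symm with h | h
        · exact absurd h hc
        · exact h
      · exact hoff v hv x hx
    simp [hv0]
  have hkD : Module.finrank ℝ ↥D ≤ R.card := by
    have h := LinearMap.finrank_le_finrank_of_injective hFinj
    rwa [Module.finrank_fintype_fun_eq_card, Fintype.card_coe] at h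
  have hcardXu : Xu.card = ∑ r ∈ R, (cls r).card := by
    rw [Finset.card_eq_sum_card_fiberwise (fun x hx => Finset.mem_image_of_mem rep hx)]
    exact Finset.sum_congr rfl (fun r hr => by rw [hfiber r hr])
  have h2k : 2 * R.card ≤ Xu.card := by
    rw [hcardXu]
    calc 2 * R.card = ∑ _r ∈ R, 2 := by simp [Finset.sum_const, mul_comm]
      _ ≤ ∑ r ∈ R, (cls r).card := Finset.sum_le_sum (fun r hr => hcls_card2 r (hRXu r hr))
  have hXuN : Xu.card ≤ N := by rw [hN]; exact Finset.card_le_univ Xu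
  have hmk : N - (N+1)/2 ≤ R.card := by rw [← hrkD]; exact hkD
  have hkm : R.card = N - (N+1)/2 := by omega
  have hcls_le3 : ∀ r ∈ R, (cls r).card ≤ 3 := by
    intro r hr
    have hsplit : (cls r).card + ∑ r' ∈ R.erase r, (cls r').card = ∑ r' ∈ R, (cls r').card :=
      Finset.add_sum_erase R (fun r => (cls r).card) hr
    have hge : ∑ r' ∈ R.erase r, 2 ≤ ∑ r' ∈ R.erase r, (cls r').card :=
      Finset.sum_le_sum (fun r' hr' => hcls_card2 r' (hRXu r' (Finset.mem_of_mem_erase hr')))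
    rw [Finset.sum_const, smul_eq_mul, Finset.card_erase_of_mem hr] at hge
    have hcard1 : 1 ≤ R.card := Finset.card_pos.mpr ⟨r, hr⟩
    omega
  have hFsurj : Function.Surjective F := by
    rw [← LinearMap.range_eq_top]
    apply Submodule.eq_top_of_finrank_eq
    rw [LinearMap.finrank_range_of_inj hFinj, hrkD, Module.finrank_fintype_fun_eq_card,
      Fintype.card_coe, hkm]
  have hclass2 : ∀ r ∈ R, ∃ y, y ≠ r ∧ cls r = {r, y} ∧
      (fun z => if z = r then (1:ℝ) else if z = y then -1 else 0) ∈ D := by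
    intro r hr
    obtain ⟨vD, hvD⟩ := hFsurj (fun r' => if (r' : X) = r then 1 else 0)
    set v : X → ℝ := (vD : X → ℝ) with hvdef
    have hvval : ∀ r', (h : r' ∈ R) → v r' = if r' = r then 1 else 0 := by
      intro r' h
      have h2 := congr_fun hvD ⟨r', h⟩
      simpa [hF, LinearMap.proj] using h2
    have hvr : v r = 1 := by rw [hvval r hr, if_pos rfl]
    have hsupp : ∀ x, x ∉ cls r → v x = 0 := by
      intro x hx
      by_cases hxXu : x ∈ Xu
      · have hrepx : rep x ∈ R := Finset.mem_image_of_mem rep hxXu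
        have hne : rep x ≠ r := by
          intro he
          apply hx
          rw [hclsmem]
          refine ⟨hxXu, ?_⟩
          have h := hPrt_rep x hxXu
          rw [he] at h
          exact hPrt_symm r x h
        have hvrep : v (rep x) = 0 := by rw [hvval (rep x) hrepx, if_neg hne]
        obtain ⟨c, hc, hcall⟩ := hPrt_rep x hxXu
        have h1 := hcall v vD.2
        rw [hvrep] at h1
        rcases mul_eq_zero.mp h1.symm with h | h
        · exact absurd h hc
        · exact h
      · exact hoff v vD.2 x hxXu
    have hmemne : ∀ y ∈ cls r, v y ≠ 0 := by
      intro y hy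
      obtain ⟨hyXu, c, hc, hcall⟩ := (hclsmem r y).mp hy
      rw [hcall v vD.2, hvr, mul_one]
      exact hc
    have hrXu : r ∈ Xu := hRXu r hr
    have hrcls : r ∈ cls r := hcls_self r hrXu
    have hsumcls : ∑ x ∈ cls r, v x = 0 := by
      rw [← hsumD v vD.2]
      apply Finset.sum_subset (Finset.subset_univ _)
      intro x _ hx
      exact hsupp x hx
    have hphicls : ∑ x ∈ cls r, v x * Real.log (v x) = 0 := by
      rw [← hphiD v vD.2]
      apply Finset.sum_subset (Finset.subset_univ _)
      intro x _ hx
      rw [hsupp x hx, zero_mul]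
    have hcard23 : (cls r).card = 2 ∨ (cls r).card = 3 := by
      have ha := hcls_card2 r hrXu
      have hb := hcls_le3 r hr
      omega
    rcases hcard23 with h2 | h3
    · have herase : ((cls r).erase r).card = 1 := by
        rw [Finset.card_erase_of_mem hrcls, h2]
      obtain ⟨y, hy⟩ := Finset.card_eq_one.mp herase
      have hyer : y ∈ (cls r).erase r := by rw [hy]; exact Finset.mem_singleton_self y
      have hyne : y ≠ r := (Finset.mem_erase.mp hyer).1
      have hymem : y ∈ cls r := (Finset.mem_erase.mp hyer).2
      have hclseq : cls r = {r, y} := by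
        rw [← Finset.insert_erase hrcls, hy]
      have hsum2 : v r + v y = 0 := by
        rw [← hsumcls, hclseq, Finset.sum_pair (Ne.symm hyne)]
      have hvy : v y = -1 := by rw [hvr] at hsum2; linarith
      refine ⟨y, hyne, hclseq, ?_⟩
      have hveq : v = fun z => if z = r then (1:ℝ) else if z = y then -1 else 0 := by
        funext z
        by_cases hz1 : z = r
        · rw [if_pos hz1, hz1]; exact hvr
        · rw [if_neg hz1]
          by_cases hz2 : z = y
          · rw [if_pos hz2, hz2]; exact hvy
          · rw [if_neg hz2]
            apply hsupp
            rw [hclseq]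
            simp [hz1, hz2]
      rw [← hveq]
      exact vD.2
    · exfalso
      have herase : ((cls r).erase r).card = 2 := by
        rw [Finset.card_erase_of_mem hrcls, h3]
      obtain ⟨y, z, hyz, hyzeq⟩ := Finset.card_eq_two.mp herase
      have hymem : y ∈ (cls r).erase r := by rw [hyzeq]; simp
      have hzmem : z ∈ (cls r).erase r := by rw [hyzeq]; simp
      have hclseq : cls r = insert r {y, z} := by
        rw [← Finset.insert_erase hrcls, hyzeq]
      have hyne : y ≠ r := (Finset.mem_erase.mp hymem).1
      have hzne : z ≠ r := (Finset.mem_erase.mp hzmem).1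
      have hrnotin : r ∉ ({y, z} : Finset X) := by simp [Ne.symm hyne, Ne.symm hzne]
      have hsum3 : v r + (v y + v z) = 0 := by
        rw [← hsumcls, hclseq, Finset.sum_insert hrnotin, Finset.sum_pair hyz]
      have hphi3 : v r * Real.log (v r) + (v y * Real.log (v y) + v z * Real.log (v z)) = 0 := by
        rw [← hphicls, hclseq, Finset.sum_insert hrnotin, Finset.sum_pair hyz]
      have hvy := hmemne y (Finset.mem_of_mem_erase hymem)
      have hvz := hmemne z (Finset.mem_of_mem_erase hzmem)
      rw [hvr] at hsum3 hphi3
      rw [Real.log_one] at hphi3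
      exact three_class_absurd hvy hvz (by linarith) (by linarith)
  have hcls_card_eq2 : ∀ x ∈ Xu, (cls x).card = 2 := by
    intro x hx
    have hrR : rep x ∈ R := Finset.mem_image_of_mem rep hx
    obtain ⟨y0, hy0ne, hclseq, -⟩ := hclass2 (rep x) hrR
    have he : cls x = cls (rep x) := hcls_eq x (rep x) (hPrt_symm (rep x) x (hPrt_rep x hx))
    rw [he, hclseq, Finset.card_insert_of_notMem (by simp [Ne.symm hy0ne]),
      Finset.card_singleton]
  have hpair : ∀ x ∈ Xu, ∃ y, y ≠ x ∧ y ∈ Xu ∧ (∀ v ∈ D, v y = -v x) ∧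
      ((fun z => if z = x then (1:ℝ) else if z = y then -1 else 0) ∈ D) := by
    intro x hx
    have hrR : rep x ∈ R := Finset.mem_image_of_mem rep hx
    obtain ⟨y0, hy0ne, hclseq, hwD⟩ := hclass2 (rep x) hrR
    have hxcls : x ∈ cls (rep x) := (hclsmem _ _).mpr ⟨hx, hPrt_symm (rep x) x (hPrt_rep x hx)⟩
    have hy0cls : y0 ∈ cls (rep x) := by rw [hclseq]; simp
    have hy0Xu : y0 ∈ Xu := hclsXu _ _ hy0cls
    have hval : ∀ v ∈ D, v y0 = -v (rep x) := by
      intro v hv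
      obtain ⟨-, c, hc, hcall⟩ := (hclsmem (rep x) y0).mp hy0cls
      have h1 := hcall _ hwD
      simp only [if_neg hy0ne, eq_self_iff_true, if_true, mul_one] at h1
      rw [hcall v hv, ← h1]
      ring
    rw [hclseq, Finset.mem_insert, Finset.mem_singleton] at hxcls
    rcases hxcls with heq | heq
    · refine ⟨y0, by rw [← heq] at hy0ne; exact hy0ne, hy0Xu, ?_, ?_⟩
      · intro v hv
        rw [hval v hv, ← heq]
      · rw [heq]
        exact hwD
    · subst heq
      refine ⟨rep x, Ne.symm hy0ne, hRXu _ hrR, ?_, ?_⟩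
      · intro v hv
        have h := hval v hv
        linarith
      · have hneg : (fun z => if z = x then (1:ℝ) else if z = rep x then -1 else 0)
            = -(fun z => if z = rep x then (1:ℝ) else if z = x then -1 else 0) := by
          funext z
          simp only [Pi.neg_apply]
          by_cases h1 : z = x
          · subst h1
            simp [hy0ne]
          · by_cases h2 : z = rep x
            · subst h2
              simp [h1]
            · simp [h1, h2]
        rw [hneg]
        exact Submodule.neg_mem D hwD
  set piX : X → X := fun x => if h : ((cls x).erase x).Nonempty then ((cls x).erase x).min' h else x
    with hpiXdef
  have hpi_off : ∀ x, x ∉ Xu → piX x = x := by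
    intro x hx
    have hempty : ¬ ((cls x).erase x).Nonempty := by
      rintro ⟨y, hy⟩
      have hycls := Finset.mem_of_mem_erase hy
      obtain ⟨hyXu, c, hc, hcall⟩ := (hclsmem x y).mp hycls
      obtain ⟨v, hv, hvy⟩ := (hXumem y).mp hyXu
      apply hvy
      rw [hcall v hv, hoff v hv x hx, mul_zero]
    show (if h : ((cls x).erase x).Nonempty then ((cls x).erase x).min' h else x) = x
    rw [dif_neg hempty]
  have hpi_spec : ∀ x ∈ Xu, piX x ≠ x ∧ piX x ∈ Xu ∧ (∀ v ∈ D, v (piX x) = -v x) ∧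
      ((fun z => if z = x then (1:ℝ) else if z = piX x then -1 else 0) ∈ D) := by
    intro x hx
    obtain ⟨y, hyne, hyXu, hp1, hp2⟩ := hpair x hx
    have hycls : y ∈ cls x :=
      (hclsmem x y).mpr ⟨hyXu, ⟨-1, by norm_num, fun v hv => by rw [hp1 v hv]; ring⟩⟩
    have herase1 : ((cls x).erase x).card = 1 := by
      rw [Finset.card_erase_of_mem (hcls_self x hx), hcls_card_eq2 x hx]
    obtain ⟨w0, hw0⟩ := Finset.card_eq_one.mp herase1
    have hyw : y = w0 := by
      have hmem : y ∈ ({w0} : Finset X) := by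
        rw [← hw0]; exact Finset.mem_erase.mpr ⟨hyne, hycls⟩
      exact Finset.mem_singleton.mp hmem
    have hset : (cls x).erase x = {y} := by rw [hw0, hyw]
    have hpieq : piX x = y := by
      show (if h : ((cls x).erase x).Nonempty then ((cls x).erase x).min' h else x) = y
      rw [dif_pos (by rw [hset]; exact ⟨y, Finset.mem_singleton_self y⟩)]
      simp only [hset, Finset.min'_singleton]
    rw [hpieq]
    exact ⟨hyne, hyXu, hp1, hp2⟩
  have hpi_inv : ∀ x ∈ Xu, piX (piX x) = x := by
    intro x hx
    obtain ⟨hne1, hXu1, hval1, -⟩ := hpi_spec x hx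
    obtain ⟨hne2, hXu2, hval2, -⟩ := hpi_spec (piX x) hXu1
    have hcard : ((cls (piX x)).erase (piX x)).card = 1 := by
      rw [Finset.card_erase_of_mem (hcls_self _ hXu1), hcls_card_eq2 _ hXu1]
    have h1 : piX (piX x) ∈ (cls (piX x)).erase (piX x) := by
      refine Finset.mem_erase.mpr ⟨hne2, ?_⟩
      rw [hclsmem]
      exact ⟨hXu2, ⟨-1, by norm_num, fun v hv => by rw [hval2 v hv]; ring⟩⟩
    have h2 : x ∈ (cls (piX x)).erase (piX x) := by
      refine Finset.mem_erase.mpr ⟨Ne.symm hne1, ?_⟩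
      rw [hclsmem]
      refine ⟨hx, ⟨-1, by norm_num, fun v hv => ?_⟩⟩
      rw [hval1 v hv]; ring
    exact Finset.card_le_one.mp (le_of_eq hcard) _ h1 _ h2
  refine ⟨fun a b => b = a ∨ (a ∈ Xu ∧ b = piX a), ⟨fun a => Or.inl rfl, ?_, ?_⟩, ?_⟩
  · rintro a b (rfl | ⟨haXu, rfl⟩)
    · exact Or.inl rfl
    · exact Or.inr ⟨(hpi_spec a haXu).2.1, (hpi_inv a haXu).symm⟩
  · rintro a b c hab hbc
    rcases hab with rfl | ⟨haXu, rfl⟩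
    · exact hbc
    · rcases hbc with rfl | ⟨hpaXu, rfl⟩
      · exact Or.inr ⟨haXu, rfl⟩
      · exact Or.inl (hpi_inv a haXu)
  · ext P
    constructor
    · intro hP
      refine ⟨hP.1, hP.2.1, ?_⟩
      rintro x y (rfl | ⟨hxXu, rfl⟩)
      · rfl
      · obtain ⟨hne, hpiXu, -, hwD⟩ := hpi_spec x hxXu
        have hlogP := hlogQ P hP
        have h0 : ∑ z, (if z = x then (1:ℝ) else if z = piX x then -1 else 0) * Real.log (P z)
            = 0 := (hmemD _).mp hwD _ hlogP
        have h2 : ∑ z, (if z = x then (1:ℝ) else if z = piX x then -1 else 0) * Real.log (P z)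
            = Real.log (P x) - Real.log (P (piX x)) :=
          sum_pair_indicator x (piX x) (Ne.symm hne) _
        rw [h0] at h2
        have hll : Real.log (P x) = Real.log (P (piX x)) := by linarith
        calc P x = Real.exp (Real.log (P x)) := (Real.exp_log (hP.1 x)).symm
          _ = Real.exp (Real.log (P (piX x))) := by rw [hll]
          _ = P (piX x) := Real.exp_log (hP.1 (piX x))
    · intro hP
      refine ⟨hP.1, hP.2.1, ?_⟩
      have hlogPT : (fun x => Real.log (P x)) ∈ T := by
        refine (hmemT _).mpr ?_
        intro v hv
        apply Finset.sum_involution (fun a _ => piX a)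
        · intro a _
          by_cases ha : a ∈ Xu
          · obtain ⟨-, -, hval, -⟩ := hpi_spec a ha
            have hPeq : P a = P (piX a) := hP.2.2 a (piX a) (Or.inr ⟨ha, rfl⟩)
            rw [hval v hv, hPeq]
            ring
          · rw [hpi_off a ha, hoff v hv a ha]
            ring
        · intro a _ hfa
          by_cases ha : a ∈ Xu
          · exact (hpi_spec a ha).1
          · exfalso; apply hfa; rw [hoff v hv a ha]; ring
        · intro a _
          exact Finset.mem_univ _
        · intro a _
          by_cases ha : a ∈ Xu
          · exact hpi_inv a ha
          · rw [hpi_off a ha, hpi_off a ha]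
      have heq2 : (fun x => Real.log (P x / ν x))
          = (fun x => Real.log (P x)) - (fun x => Real.log (ν x)) := by
        funext x
        simp only [Pi.sub_apply]
        rw [Real.log_div (hP.1 x).ne' (hν x).ne']
      rw [heq2]
      exact Submodule.sub_mem T hlogPT hlogν
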